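/- (Measure of the set of strongly resonant frequency vectors.) There is a constant C = C(d,η) such that for every integer N ≥ 3, every ε ∈ (0,1), and every A ∈ G_η: Leb{α ∈ 𝕋^d : there exists k ∈ ℤ^d with 1 ≤ |k̄_i| ≤ 2N for all i and (∏_i |k̄_i|) · dist(k·α, ℤ) < ε/(ln N)^d} ≤ C·ε, where Leb is the Haar probability measure on 𝕋^d and dist(θ,ℤ) is the distance from θ to the nearest integer. -/

import Mathlib

open MeasureTheory Real Filter
open scoped ENNReal

noncomputable section

/-- `SL(d, ℝ)`. -/
abbrev SLR (d : ℕ) := Matrix.SpecialLinearGroup (Fin d) ℝ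

/-- The set `G_η` of matrices in `SL(d,ℝ)` whose entries are `η`-close to the identity. -/
def Gset (d : ℕ) (η : ℝ) : Set (SLR d) :=
  {A | (∀ i, |A.1 i i - 1| < η) ∧ ∀ i j, i ≠ j → |A.1 i j| < η}

/-- The dual coordinates `k̄_i = Σ_j a_{ij} k_j`. -/
def kbar (d : ℕ) (A : SLR d) (k : Fin d → ℤ) (i : Fin d) : ℝ :=
  ∑ j, A.1 i j * (k j : ℝ)

/-- `k·α = Σ_i k_i α_i`. -/
def dotP (d : ℕ) (k : Fin d → ℤ) (α : Fin d → ℝ) : ℝ := ∑ i, (k i : ℝ) * α i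

/-- The Fourier term `U_k(ξ,N)` of the discrepancy. -/
def Uk (d : ℕ) (A : SLR d) (u α x : Fin d → ℝ) (N : ℕ) (k : Fin d → ℤ) : ℝ :=
  (π ^ d)⁻¹ * (∏ i, Real.sin (2 * π * kbar d A k i * u i) / kbar d A k i) *
    (Real.sin (π * N * dotP d k α) / Real.sin (π * dotP d k α)) *
    Real.cos (2 * π * dotP d k x + π * (N + 1) * dotP d k α)

/-- The fundamental domain `[0,1)^d` of the torus `𝕋^d`. -/
def cube (d : ℕ) : Set (Fin d → ℝ) := Set.univ.pi fun _ => Set.Ico (0 : ℝ) 1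

/-- The distance from `θ ∈ ℝ` to the nearest integer. -/
def distInt (θ : ℝ) : ℝ := |θ - round θ|

lemma det_updateRow_one (d : ℕ) (j : Fin d) (k : Fin d → ℤ) :
    ((1 : Matrix (Fin d) (Fin d) ℝ).updateRow j (fun l => (k l : ℝ))).det = (k j : ℝ) := by
  have h : (fun l => (k l : ℝ)) = ∑ i, (k i : ℝ) • (1 : Matrix (Fin d) (Fin d) ℝ) i := by
    funext l
    simp [Matrix.one_apply, Finset.sum_ite_eq]
  rw [h, Matrix.det_updateRow_sum]
  simp


set_option maxHeartbeats 1000000 in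
lemma per_k (d : ℕ) (hd : 1 ≤ d) (k : Fin d → ℤ) (hk : k ≠ 0) (δ : ℝ) (hδ0 : 0 < δ)
    (hδ1 : δ ≤ 1) :
    volume {α : Fin d → ℝ | α ∈ cube d ∧ distInt (dotP d k α) < δ}
      ≤ ENNReal.ofReal (10 * d * δ) := by
  haveI : Nonempty (Fin d) := ⟨⟨0, hd⟩⟩
  obtain ⟨j, -, hj⟩ := Finset.exists_max_image Finset.univ (fun i => |k i|) Finset.univ_nonempty
  have hj' : ∀ i, |k i| ≤ |k j| := fun i => hj i (Finset.mem_univ i)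
  have hkj : k j ≠ 0 := by
    intro h
    apply hk; funext i
    have := hj' i
    rw [h] at this
    simpa using le_antisymm (by simpa using this) (abs_nonneg (k i))
  have hkj1 : (1 : ℤ) ≤ |k j| := Int.one_le_abs (by exact hkj)
  set Sk : ℤ := ∑ i, |k i| with hSk
  have hSk0 : (0:ℤ) ≤ Sk := Finset.sum_nonneg fun i _ => abs_nonneg _
  set M : ℤ := Sk + 1 with hM
  set E : Set ℝ := ⋃ n ∈ Finset.Icc (-M) M, Metric.ball (n : ℝ) δ with hE
  have hM0 : (0:ℤ) ≤ M := by omega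
  have hcard : (((Finset.Icc (-M) M).card : ℤ)) = 2*M+1 := by
    rw [Int.card_Icc]; omega
  have hcardR : (((Finset.Icc (-M) M).card : ℕ) : ℝ) = 2*(M:ℝ)+1 := by
    exact_mod_cast hcard
  have hvolE : volume E ≤ ENNReal.ofReal ((2*(M:ℝ)+1) * (2*δ)) := by
    rw [hE]
    refine (measure_biUnion_finset_le _ _).trans ?_
    have : ∀ n ∈ Finset.Icc (-M) M, volume (Metric.ball ((n:ℤ) : ℝ) δ) = ENNReal.ofReal (2*δ) :=
      fun n _ => Real.volume_ball _ _
    rw [Finset.sum_congr rfl this, Finset.sum_const, nsmul_eq_mul]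
    rw [← ENNReal.ofReal_natCast, ← ENNReal.ofReal_mul (by positivity)]
    apply ENNReal.ofReal_le_ofReal
    rw [hcardR]
  set F : Fin d → Set ℝ := fun i => if i = j then E else Set.Ico (0:ℝ) 1 with hF
  set Mx := (1 : Matrix (Fin d) (Fin d) ℝ).updateRow j (fun l => (k l : ℝ)) with hMx
  set S : (Fin d → ℝ) →ₗ[ℝ] (Fin d → ℝ) := Matrix.toLin' Mx with hS
  have hdet : LinearMap.det S = (k j : ℝ) := by
    rw [hS, LinearMap.det_toLin']; exact det_updateRow_one d j k
  have hdet0 : LinearMap.det S ≠ 0 := by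
    rw [hdet]; exact_mod_cast hkj
  have hrow : ∀ (α : Fin d → ℝ) i, S α i = if i = j then dotP d k α else α i := by
    intro α i
    have h0 : S α = Mx.mulVec α := Matrix.toLin'_apply Mx α
    rw [h0]
    by_cases h : i = j
    · subst h
      simp [Matrix.mulVec, dotProduct, hMx, dotP]
    · simp [Matrix.mulVec, dotProduct, hMx, Matrix.updateRow_ne h, Matrix.one_apply,
        ite_mul, Finset.sum_ite_eq, h]
  have hsub : {α : Fin d → ℝ | α ∈ cube d ∧ distInt (dotP d k α) < δ}
      ⊆ S ⁻¹' (Set.univ.pi F) := by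
    rintro α ⟨hc, hdist⟩
    have hcube : ∀ i, α i ∈ Set.Ico (0:ℝ) 1 := Set.mem_univ_pi.mp hc
    have hbound : |dotP d k α| ≤ (Sk : ℝ) := by
      have h1 : |dotP d k α| ≤ ∑ i, |(k i : ℝ) * α i| := Finset.abs_sum_le_sum_abs _ _
      refine h1.trans ?_
      rw [hSk]
      push_cast
      apply Finset.sum_le_sum
      intro i _
      rw [abs_mul]
      have h1 : |α i| ≤ 1 := by
        rw [abs_le]
        exact ⟨by linarith [(hcube i).1], le_of_lt (by linarith [(hcube i).2])⟩
      calc |(k i : ℝ)| * |α i| ≤ |(k i : ℝ)| * 1 :=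
            mul_le_mul_of_nonneg_left h1 (abs_nonneg _)
        _ = |(k i : ℝ)| := mul_one _
    intro i _
    rw [hrow]
    by_cases h : i = j
    · rw [if_pos h, hF]
      simp only [h, if_pos rfl]
      set θ := dotP d k α with hθ
      set n : ℤ := round θ with hn
      have hdd : |θ - (n:ℝ)| < δ := hdist
      have h1 : |(n:ℝ)| - |θ| ≤ |(n:ℝ) - θ| := abs_sub_abs_le_abs_sub _ _
      have h2 : |(n:ℝ) - θ| = |θ - (n:ℝ)| := abs_sub_comm _ _
      have h3 : |(n:ℝ)| < (M:ℝ) := by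
        rw [hM]; push_cast
        have := hdd
        linarith [hbound]
      have h4 : |n| ≤ M := by
        have h5 : ((|n| : ℤ) : ℝ) < (M:ℝ) := by rw [Int.cast_abs]; exact h3
        have h6 : |n| < M := by exact_mod_cast h5
        omega
      refine Set.mem_iUnion₂.mpr ⟨n, ?_, ?_⟩
      · rw [Finset.mem_Icc]
        exact ⟨by linarith [(abs_le.mp h4).1], (abs_le.mp h4).2⟩
      · rw [Metric.mem_ball, Real.dist_eq]
        exact hdd
    · rw [if_neg h, hF]
      simp only [if_neg h]
      exact hcube i
  have hvolF : volume (Set.univ.pi F) ≤ ENNReal.ofReal ((2*(M:ℝ)+1) * (2*δ)) := by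
    rw [volume_pi_pi F]
    have h2 : ∏ i, volume (F i) = volume E := by
      have h : ∀ i, volume (F i) = if i = j then volume E else 1 := by
        intro i
        by_cases h : i = j <;> simp [hF, h, Real.volume_Ico]
      rw [Finset.prod_congr rfl fun i _ => h i]
      simp
    rw [h2]; exact hvolE
  calc volume {α : Fin d → ℝ | α ∈ cube d ∧ distInt (dotP d k α) < δ}
      ≤ volume (S ⁻¹' (Set.univ.pi F)) := measure_mono hsub
    _ = ENNReal.ofReal |(LinearMap.det S)⁻¹| * volume (Set.univ.pi F) :=
        Measure.addHaar_preimage_linearMap volume hdet0 _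
    _ ≤ ENNReal.ofReal |(LinearMap.det S)⁻¹| * ENNReal.ofReal ((2*(M:ℝ)+1) * (2*δ)) :=
        mul_le_mul_right hvolF _
    _ = ENNReal.ofReal (|(LinearMap.det S)⁻¹| * ((2*(M:ℝ)+1) * (2*δ))) := by
        rw [← ENNReal.ofReal_mul (abs_nonneg _)]
    _ ≤ ENNReal.ofReal (10 * d * δ) := by
        apply ENNReal.ofReal_le_ofReal
        rw [hdet, abs_inv, ← Int.cast_abs]
        have hsum : Sk ≤ d * |k j| := by
          rw [hSk]
          calc ∑ i, |k i| ≤ ∑ _i : Fin d, |k j| := Finset.sum_le_sum fun i _ => hj' i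
            _ = d * |k j| := by simp [Finset.sum_const, mul_comm]
        have hZ : 2 * M + 1 ≤ 5 * d * |k j| := by
          have hd' : (1:ℤ) ≤ d := by exact_mod_cast hd
          nlinarith
        have hR : (2 * (M:ℝ) + 1) ≤ 5 * d * (|k j| : ℝ) := by exact_mod_cast hZ
        have habs : (1:ℝ) ≤ ((|k j| : ℤ) : ℝ) := by exact_mod_cast hkj1
        rw [inv_mul_eq_div, div_le_iff₀ (by linarith)]
        have hR' : (2*(M:ℝ)+1) ≤ 5*d*((|k j| : ℤ):ℝ) := by
          rw [Int.cast_abs]; exact hR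
        nlinarith [mul_le_mul_of_nonneg_right hR' (by positivity : (0:ℝ) ≤ 2*δ), hδ0]

lemma log_N_ge_one (N : ℕ) (hN : 3 ≤ N) : (1:ℝ) ≤ Real.log N := by
  rw [Real.le_log_iff_exp_le (by positivity)]
  calc Real.exp 1 ≤ 2.7182818286 := le_of_lt Real.exp_one_lt_d9
    _ ≤ (N:ℝ) := by
        have : (3:ℝ) ≤ (N:ℝ) := by exact_mod_cast hN
        linarith


lemma sum_h_bound (N : ℕ) (hN : 3 ≤ N) :
    ∑ n ∈ Finset.Icc (-(9*(N:ℤ))) (9*(N:ℤ)), 5 / (max 1 (|n| : ℝ)) ≤ 120 * Real.log N := by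
  set m : ℕ := 9*N with hm
  have hmZ : (9*(N:ℤ)) = (m:ℤ) := by push_cast [hm]; ring
  rw [hmZ]
  have hm1 : 1 ≤ m := by omega
  -- positive part
  have hpos : ∑ n ∈ Finset.Icc (1:ℤ) (m:ℤ), (5:ℝ) / (max 1 (|n| : ℝ))
      = 5 * ∑ n ∈ Finset.Icc 1 m, ((n:ℕ):ℝ)⁻¹ := by
    have hIcc : Finset.Icc (1:ℤ) (m:ℤ)
        = (Finset.Icc 1 m).map ⟨((↑·) : ℕ → ℤ), Nat.cast_injective⟩ := by
      ext n
      simp only [Finset.mem_map, Finset.mem_Icc, Function.Embedding.coeFn_mk]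
      constructor
      · rintro ⟨h1, h2⟩
        exact ⟨n.toNat, ⟨by omega, by omega⟩, by omega⟩
      · rintro ⟨a, ⟨h1, h2⟩, rfl⟩
        exact ⟨by exact_mod_cast h1, by exact_mod_cast h2⟩
    rw [hIcc, Finset.sum_map, Finset.mul_sum]
    apply Finset.sum_congr rfl
    intro a ha
    simp only [Function.Embedding.coeFn_mk]
    rw [Finset.mem_Icc] at ha
    have h1 : (1:ℝ) ≤ (a:ℝ) := by exact_mod_cast ha.1
    have : |((a:ℤ):ℝ)| = (a:ℝ) := by
      rw [abs_of_nonneg] <;> [push_cast; skip] <;> [rfl; positivity]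
    rw [this, max_eq_right h1]
    field_simp
  have hharm : ∑ n ∈ Finset.Icc 1 m, ((n:ℕ):ℝ)⁻¹ ≤ 1 + Real.log m := by
    have h1 : ((harmonic m : ℚ) : ℝ) = ∑ n ∈ Finset.Icc 1 m, ((n:ℕ):ℝ)⁻¹ := by
      rw [harmonic_eq_sum_Icc]; push_cast; rfl
    rw [← h1]; exact harmonic_le_one_add_log m
  -- decompose Icc (-m) m
  have hsplit : Finset.Icc (-(m:ℤ)) (m:ℤ)
      = (Finset.Icc (-(m:ℤ)) (-1)) ∪ Finset.Icc (0:ℤ) (m:ℤ) := by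
    ext n
    simp only [Finset.mem_union, Finset.mem_Icc]
    omega
  have hdisj : Disjoint (Finset.Icc (-(m:ℤ)) (-1)) (Finset.Icc (0:ℤ) (m:ℤ)) := by
    rw [Finset.disjoint_left]
    intro n h1 h2
    rw [Finset.mem_Icc] at h1 h2
    omega
  have hneg : Finset.Icc (-(m:ℤ)) (-1) = (Finset.Icc (1:ℤ) (m:ℤ)).image (fun n => -n) := by
    ext n
    simp only [Finset.mem_image, Finset.mem_Icc]
    constructor
    · rintro ⟨h1, h2⟩; exact ⟨-n, ⟨by omega, by omega⟩, by omega⟩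
    · rintro ⟨a, ⟨h1, h2⟩, rfl⟩; omega
  have hzero : Finset.Icc (0:ℤ) (m:ℤ) = insert (0:ℤ) (Finset.Icc (1:ℤ) (m:ℤ)) := by
    ext n
    simp only [Finset.mem_insert, Finset.mem_Icc]
    omega
  rw [hsplit, Finset.sum_union hdisj, hneg,
    Finset.sum_image (by intro a _ b _ h; exact neg_injective h), hzero,
    Finset.sum_insert (by rw [Finset.mem_Icc]; omega)]
  simp only [Int.cast_neg, abs_neg]
  rw [hpos]
  have hlog9 : Real.log (m:ℝ) ≤ Real.log 9 + Real.log N := by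
    rw [hm]
    push_cast
    rw [Real.log_mul (by norm_num) (by positivity)]
  have hlog9' : Real.log 9 ≤ 8 := by
    have := Real.log_le_sub_one_of_pos (x := 9) (by norm_num)
    linarith
  have hlogN := log_N_ge_one N hN
  have h0 : (5:ℝ) / max 1 (|(0:ℤ)| : ℝ) = 5 := by norm_num
  rw [h0]
  have hH : ∑ n ∈ Finset.Icc 1 m, ((n:ℕ):ℝ)⁻¹ ≤ 9 + Real.log N := by
    refine hharm.trans ?_
    linarith
  linarith [hH]

/-- linearity of kbar in `k` (as difference). -/
lemma kbar_sub (d : ℕ) (A : SLR d) (k k' : Fin d → ℤ) (i : Fin d) :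
    kbar d A k i - kbar d A k' i = ∑ j, A.1 i j * ((k j - k' j : ℤ) : ℝ) := by
  rw [kbar, kbar, ← Finset.sum_sub_distrib]
  apply Finset.sum_congr rfl
  intro j _
  push_cast
  ring

set_option maxHeartbeats 1000000 in

set_option maxHeartbeats 1000000 in
/-- **Measure of the set of strongly resonant frequency vectors**: for `η` small there is
`C = C(d,η)` such that for all `N ≥ 3`, `ε ∈ (0,1)` and `A ∈ G_η`, the Haar measure of the
set of `α ∈ 𝕋^d` for which some `k ∈ ℤ^d` satisfies `1 ≤ |k̄_i| ≤ 2N` for all `i` and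
`(∏_i |k̄_i|) ‖k·α‖ < ε/(ln N)^d` is at most `C ε`. -/
theorem strongly_resonant_set_measure_bound (d : ℕ) (hd : 1 ≤ d) :
    ∃ η₀ > (0 : ℝ), ∀ η : ℝ, 0 < η → η < η₀ →
    ∃ C : ℝ, ∀ N : ℕ, 3 ≤ N → ∀ ε : ℝ, 0 < ε → ε < 1 → ∀ A : SLR d, A ∈ Gset d η →
      volume {α : Fin d → ℝ | α ∈ cube d ∧ ∃ k : Fin d → ℤ,
          (∀ i, 1 ≤ |kbar d A k i| ∧ |kbar d A k i| ≤ 2 * N) ∧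
          (∏ i, |kbar d A k i|) * distInt (dotP d k α) < ε / Real.log N ^ d}
        ≤ ENNReal.ofReal (C * ε) := by
  haveI : Nonempty (Fin d) := ⟨⟨0, hd⟩⟩
  have hdR : (1:ℝ) ≤ (d:ℝ) := by exact_mod_cast hd
  refine ⟨1 / (4 * d), by positivity, fun η hη0 hη1 => ⟨10 * d * 120 ^ d, ?_⟩⟩
  intro N hN ε hε0 hε1 A hA
  classical
  have hηd : η * d < 1 / 4 := by
    have : η < 1 / (4 * d) := hη1
    calc η * d < (1 / (4 * d)) * d := by
          apply mul_lt_mul_of_pos_right this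
          linarith
      _ ≤ 1 / 4 := by
          rw [div_mul_eq_mul_div, one_mul, div_le_div_iff₀ (by positivity) (by norm_num)]
          linarith
  have hlogN := log_N_ge_one N hN
  set L : ℝ := Real.log N ^ d with hL
  have hL1 : (1:ℝ) ≤ L := by
    rw [hL]
    calc (1:ℝ) = 1 ^ d := (one_pow d).symm
      _ ≤ Real.log N ^ d := pow_le_pow_left₀ (by norm_num) hlogN d
  have hL0 : (0:ℝ) < L := by linarith
  -- the admissibility predicate
  set K : (Fin d → ℤ) → Prop :=
    fun k => ∀ i, 1 ≤ |kbar d A k i| ∧ |kbar d A k i| ≤ 2 * N with hK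
  -- per-k sets
  set W : (Fin d → ℤ) → Set (Fin d → ℝ) := fun k =>
    {α | α ∈ cube d ∧ K k ∧ (∏ i, |kbar d A k i|) * distInt (dotP d k α) < ε / L} with hW
  have hsub : {α : Fin d → ℝ | α ∈ cube d ∧ ∃ k : Fin d → ℤ,
      (∀ i, 1 ≤ |kbar d A k i| ∧ |kbar d A k i| ≤ 2 * N) ∧
      (∏ i, |kbar d A k i|) * distInt (dotP d k α) < ε / Real.log N ^ d} ⊆ ⋃ k, W k := by
    rintro α ⟨hc, k, hfreq, hlt⟩
    exact Set.mem_iUnion.mpr ⟨k, hc, hfreq, hlt⟩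
  -- the comparison function
  set f : (Fin d → ℤ) → ℝ≥0∞ := fun k =>
    if K k then ENNReal.ofReal (∏ i, (|kbar d A k i|)⁻¹) else 0 with hf
  have hWk : ∀ k, volume (W k) ≤ ENNReal.ofReal (10 * d * ε / L) * f k := by
    intro k
    by_cases hKk : K k
    · -- admissible
      have hprod1 : (1:ℝ) ≤ ∏ i, |kbar d A k i| := by
        calc (1:ℝ) = ∏ _i : Fin d, 1 := by simp
          _ ≤ ∏ i, |kbar d A k i| :=
            Finset.prod_le_prod (fun i _ => by norm_num) (fun i _ => (hKk i).1)
      have hprod0 : (0:ℝ) < ∏ i, |kbar d A k i| := by linarith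
      set δ : ℝ := (ε / L) / (∏ i, |kbar d A k i|) with hδ
      have hδ0 : 0 < δ := by positivity
      have hδ1 : δ ≤ 1 := by
        rw [hδ, div_le_one hprod0]
        calc ε / L ≤ ε := by
              rw [div_le_iff₀ hL0]
              nlinarith
          _ ≤ 1 := le_of_lt hε1
          _ ≤ ∏ i, |kbar d A k i| := hprod1
      have hk0 : k ≠ 0 := by
        intro h
        have h1 := (hKk ⟨0, hd⟩).1
        rw [h] at h1
        simp [kbar] at h1
        linarith
      have hsub2 : W k ⊆ {α : Fin d → ℝ | α ∈ cube d ∧ distInt (dotP d k α) < δ} := by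
        rintro α ⟨hc, -, hlt⟩
        refine ⟨hc, ?_⟩
        rw [hδ, lt_div_iff₀ hprod0]
        linarith [hlt, mul_comm (∏ i, |kbar d A k i|) (distInt (dotP d k α))]
      calc volume (W k) ≤ volume {α : Fin d → ℝ | α ∈ cube d ∧ distInt (dotP d k α) < δ} :=
            measure_mono hsub2
        _ ≤ ENNReal.ofReal (10 * d * δ) := per_k d hd k hk0 δ hδ0 hδ1
        _ = ENNReal.ofReal (10 * d * ε / L) * f k := by
            rw [hf]
            simp only [if_pos hKk]
            rw [← ENNReal.ofReal_mul (by positivity)]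
            congr 1
            rw [hδ, Finset.prod_inv_distrib]
            have hP := ne_of_gt hprod0
            have hL' := ne_of_gt hL0
            field_simp
    · have : W k = ∅ := by
        ext α
        simp only [hW, Set.mem_setOf_eq, Set.mem_empty_iff_false, iff_false]
        rintro ⟨-, hKk', -⟩
        exact hKk hKk'
      rw [this]
      simp
  -- injection
  set φ : (Fin d → ℤ) → (Fin d → ℤ) := fun k i => round (4 * kbar d A k i) with hφdef
  have hφ : Function.Injective φ := by
    intro k k' hkk
    by_contra hne
    have hvne : ∃ i, k i - k' i ≠ 0 := by
      by_contra hall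
      push_neg at hall
      apply hne
      funext i
      have := hall i
      omega
    obtain ⟨i₀, hi₀⟩ := hvne
    obtain ⟨i, -, hi⟩ := Finset.exists_max_image Finset.univ (fun l => |k l - k' l|)
      Finset.univ_nonempty
    have hi1 : (1:ℤ) ≤ |k i - k' i| :=
      le_trans (Int.one_le_abs hi₀) (hi i₀ (Finset.mem_univ i₀))
    -- lower bound on |kbar k i - kbar k' i|
    have hdiff : kbar d A k i - kbar d A k' i = ∑ j, A.1 i j * ((k j - k' j : ℤ) : ℝ) :=
      kbar_sub d A k k' i
    set v : Fin d → ℝ := fun j => ((k j - k' j : ℤ) : ℝ) with hv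
    have hvi1 : (1:ℝ) ≤ |v i| := by
      rw [hv, ← Int.cast_abs]
      exact_mod_cast hi1
    have hvle : ∀ j, |v j| ≤ |v i| := by
      intro j
      rw [hv, ← Int.cast_abs, ← Int.cast_abs]
      exact_mod_cast hi j (Finset.mem_univ j)
    have hsplit : ∑ j, A.1 i j * v j
        = A.1 i i * v i + ∑ j ∈ Finset.univ.erase i, A.1 i j * v j := by
      rw [← Finset.add_sum_erase _ _ (Finset.mem_univ i)]
    have htail : |∑ j ∈ Finset.univ.erase i, A.1 i j * v j| ≤ η * (d - 1) * |v i| := by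
      calc |∑ j ∈ Finset.univ.erase i, A.1 i j * v j|
          ≤ ∑ j ∈ Finset.univ.erase i, |A.1 i j * v j| := Finset.abs_sum_le_sum_abs _ _
        _ ≤ ∑ _j ∈ Finset.univ.erase i, η * |v i| := by
            apply Finset.sum_le_sum
            intro j hj
            rw [abs_mul]
            have hj' : j ≠ i := Finset.ne_of_mem_erase hj
            have h1 : |A.1 i j| ≤ η := le_of_lt (hA.2 i j (Ne.symm hj'))
            exact mul_le_mul h1 (hvle j) (abs_nonneg _) (le_of_lt hη0)
        _ = η * (d - 1) * |v i| := by
            rw [Finset.sum_const, Finset.card_erase_of_mem (Finset.mem_univ i)]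
            simp only [Finset.card_univ, Fintype.card_fin, nsmul_eq_mul]
            have : ((d - 1 : ℕ) : ℝ) = (d:ℝ) - 1 := by
              have : 1 ≤ d := hd
              push_cast [Nat.cast_sub this]
              ring
            rw [this]
            ring
    have hdiag : (1 - η) * |v i| ≤ |A.1 i i * v i| := by
      rw [abs_mul]
      apply mul_le_mul_of_nonneg_right _ (abs_nonneg _)
      have := hA.1 i
      rw [abs_sub_lt_iff] at this
      have h2 : 1 - η < A.1 i i := by linarith [this.2]
      rw [abs_of_pos (by nlinarith [hηd])]
      linarith
    have hlow : 3/4 < |kbar d A k i - kbar d A k' i| := by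
      rw [hdiff, hsplit]
      have h1 : |A.1 i i * v i| - |∑ j ∈ Finset.univ.erase i, A.1 i j * v j|
          ≤ |A.1 i i * v i + ∑ j ∈ Finset.univ.erase i, A.1 i j * v j| := by
        have := abs_add_le (A.1 i i * v i + ∑ j ∈ Finset.univ.erase i, A.1 i j * v j)
          (-(∑ j ∈ Finset.univ.erase i, A.1 i j * v j))
        simp only [add_neg_cancel_right, abs_neg] at this
        linarith
      have h2 : (1 - η * d) * |v i| ≤ (1 - η) * |v i| - η * (d - 1) * |v i| :=
        le_of_eq (by ring)
      have h3 : 3/4 < (1 - η * d) * |v i| := by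
        have h4 : (3:ℝ)/4 < 1 - η * d := by linarith [hηd, mul_comm η (d:ℝ)]
        nlinarith
      linarith [htail, hdiag]
    -- upper bound from equal roundings
    have hup : |kbar d A k i - kbar d A k' i| ≤ 1/4 := by
      have h1 : round (4 * kbar d A k i) = round (4 * kbar d A k' i) := congrFun hkk i
      have h2 := abs_sub_round (4 * kbar d A k i)
      have h3 := abs_sub_round (4 * kbar d A k' i)
      rw [h1] at h2
      have : |4 * kbar d A k i - 4 * kbar d A k' i| ≤ 1 := by
        calc |4 * kbar d A k i - 4 * kbar d A k' i|
            = |(4 * kbar d A k i - round (4 * kbar d A k' i))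
              - (4 * kbar d A k' i - round (4 * kbar d A k' i))| := by ring_nf
          _ ≤ |4 * kbar d A k i - (round (4 * kbar d A k' i) : ℝ)|
              + |4 * kbar d A k' i - (round (4 * kbar d A k' i) : ℝ)| := abs_sub _ _
          _ ≤ 1/2 + 1/2 := add_le_add h2 h3
          _ = 1 := by norm_num
      have h4 : |4 * (kbar d A k i - kbar d A k' i)| ≤ 1 := by
        rw [mul_sub]
        exact this
      rw [abs_mul] at h4
      rw [abs_of_nonneg (by norm_num : (0:ℝ) ≤ 4)] at h4
      linarith
    linarith
  -- the dominating function on the image side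
  set h : ℤ → ℝ≥0∞ := fun n =>
    if |n| ≤ 9*(N:ℤ) then ENNReal.ofReal (5 / max 1 (|n| : ℝ)) else 0 with hh
  set g : (Fin d → ℤ) → ℝ≥0∞ := fun mv => ∏ i, h (mv i) with hg
  have hfg : ∀ k, f k ≤ g (φ k) := by
    intro k
    simp only [hf]
    by_cases hKk : K k
    · rw [if_pos hKk]
      rw [ENNReal.ofReal_prod_of_nonneg (fun i _ => by positivity)]
      rw [hg]
      apply Finset.prod_le_prod'
      intro i _
      have h1 : (1:ℝ) ≤ |kbar d A k i| := (hKk i).1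
      have h2 : |kbar d A k i| ≤ 2*N := (hKk i).2
      set n : ℤ := round (4 * kbar d A k i) with hn
      have hr : |4 * kbar d A k i - (n:ℝ)| ≤ 1/2 := abs_sub_round _
      have hN1 : (1:ℝ) ≤ (N:ℝ) := by
        have : (3:ℕ) ≤ N := hN
        exact_mod_cast le_trans (by norm_num) this
      have habs : |(n:ℝ)| ≤ 4 * |kbar d A k i| + 1/2 := by
        have : |(n:ℝ)| - |4 * kbar d A k i| ≤ |(n:ℝ) - 4 * kbar d A k i| :=
          abs_sub_abs_le_abs_sub _ _
        rw [abs_sub_comm] at this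
        have h4 : |4 * kbar d A k i| = 4 * |kbar d A k i| := by
          rw [abs_mul, abs_of_nonneg (by norm_num : (0:ℝ) ≤ 4)]
        linarith
      have hn9 : |n| ≤ 9*(N:ℤ) := by
        have hr2 : |(n:ℝ)| ≤ 8*(N:ℝ) + 1/2 := by linarith
        have hr3 : |(n:ℝ)| < 9*(N:ℝ) := by linarith
        have hr4 : ((|n| : ℤ) : ℝ) < 9*(N:ℝ) := by
          rw [Int.cast_abs]
          exact hr3
        have hr5 : |n| < 9*(N:ℤ) := by exact_mod_cast hr4
        omega
      have hhn : h (φ k i) = ENNReal.ofReal (5 / max 1 (|(n:ℝ)|)) := by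
        rw [hh]
        simp only
        rw [if_pos hn9]
      rw [hhn]
      apply ENNReal.ofReal_le_ofReal
      have hmax : max 1 |(n:ℝ)| ≤ 5 * |kbar d A k i| := by
        apply max_le
        · linarith
        · linarith
      have hmaxpos : (0:ℝ) < max 1 |(n:ℝ)| := lt_of_lt_of_le one_pos (le_max_left _ _)
      rw [le_div_iff₀ hmaxpos]
      have hinv : |kbar d A k i|⁻¹ * |kbar d A k i| = 1 :=
        inv_mul_cancel₀ (by linarith)
      have hinvle : |kbar d A k i|⁻¹ ≤ 1 := by
        rw [inv_le_one_iff₀]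
        right; exact h1
      nlinarith [hmax, hinv, inv_nonneg.mpr (abs_nonneg (kbar d A k i))]
    · rw [if_neg hKk]
      exact bot_le
  -- sum of g
  have hgsum : ∑' mv : Fin d → ℤ, g mv ≤ ENNReal.ofReal ((120 * Real.log N)^d) := by
    have hsupp : ∀ mv : Fin d → ℤ,
        mv ∉ Fintype.piFinset (fun _ : Fin d => Finset.Icc (-(9*(N:ℤ))) (9*(N:ℤ))) →
        g mv = 0 := by
      intro mv hmv
      rw [Fintype.mem_piFinset] at hmv
      push_neg at hmv
      obtain ⟨i, hi⟩ := hmv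
      have hi' : ¬(-(9*(N:ℤ)) ≤ mv i ∧ mv i ≤ 9*(N:ℤ)) := by
        rwa [Finset.mem_Icc] at hi
      rw [hg]
      apply Finset.prod_eq_zero (Finset.mem_univ i)
      rw [hh]
      simp only
      rw [if_neg (fun hc => hi' (abs_le.mp hc))]
    rw [tsum_eq_sum hsupp]
    have hps : ∑ mv ∈ Fintype.piFinset (fun _ : Fin d => Finset.Icc (-(9*(N:ℤ))) (9*(N:ℤ))),
        g mv = ∏ _i : Fin d, ∑ n ∈ Finset.Icc (-(9*(N:ℤ))) (9*(N:ℤ)), h n := by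
      rw [Finset.prod_univ_sum]
    rw [hps]
    have hsum1 : ∑ n ∈ Finset.Icc (-(9*(N:ℤ))) (9*(N:ℤ)), h n
        ≤ ENNReal.ofReal (120 * Real.log N) := by
      have : ∀ n ∈ Finset.Icc (-(9*(N:ℤ))) (9*(N:ℤ)),
          h n = ENNReal.ofReal (5 / max 1 (|n| : ℝ)) := by
        intro n hn
        rw [Finset.mem_Icc] at hn
        rw [hh]
        simp only
        rw [if_pos (abs_le.mpr hn)]
      rw [Finset.sum_congr rfl this, ← ENNReal.ofReal_sum_of_nonneg (fun n _ => by positivity)]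
      exact ENNReal.ofReal_le_ofReal (sum_h_bound N hN)
    calc ∏ _i : Fin d, ∑ n ∈ Finset.Icc (-(9*(N:ℤ))) (9*(N:ℤ)), h n
        ≤ ∏ _i : Fin d, ENNReal.ofReal (120 * Real.log N) :=
          Finset.prod_le_prod' fun i _ => hsum1
      _ = (ENNReal.ofReal (120 * Real.log N))^d := by
          rw [Finset.prod_const, Finset.card_univ, Fintype.card_fin]
      _ = ENNReal.ofReal ((120 * Real.log N)^d) := by
          rw [ENNReal.ofReal_pow (by linarith)]
  -- put everything together
  calc volume {α : Fin d → ℝ | α ∈ cube d ∧ ∃ k : Fin d → ℤ,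
        (∀ i, 1 ≤ |kbar d A k i| ∧ |kbar d A k i| ≤ 2 * N) ∧
        (∏ i, |kbar d A k i|) * distInt (dotP d k α) < ε / Real.log N ^ d}
      ≤ volume (⋃ k, W k) := measure_mono hsub
    _ ≤ ∑' k : Fin d → ℤ, volume (W k) := measure_iUnion_le W
    _ ≤ ∑' k : Fin d → ℤ, ENNReal.ofReal (10 * d * ε / L) * f k := ENNReal.tsum_le_tsum hWk
    _ = ENNReal.ofReal (10 * d * ε / L) * ∑' k : Fin d → ℤ, f k := ENNReal.tsum_mul_left
    _ ≤ ENNReal.ofReal (10 * d * ε / L) * ∑' k : Fin d → ℤ, g (φ k) :=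
        mul_le_mul_right (ENNReal.tsum_le_tsum hfg) _
    _ ≤ ENNReal.ofReal (10 * d * ε / L) * ∑' mv : Fin d → ℤ, g mv :=
        mul_le_mul_right (ENNReal.tsum_comp_le_tsum_of_injective hφ g) _
    _ ≤ ENNReal.ofReal (10 * d * ε / L) * ENNReal.ofReal ((120 * Real.log N)^d) :=
        mul_le_mul_right hgsum _
    _ = ENNReal.ofReal ((10 * d * ε / L) * (120 * Real.log N)^d) := by
        rw [← ENNReal.ofReal_mul (by positivity)]
    _ = ENNReal.ofReal ((10 * d * 120 ^ d) * ε) := by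
        congr 1
        rw [mul_pow, hL]
        have hLne : Real.log N ^ d ≠ 0 := by positivity
        field_simp
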